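/- With s_1 = (x_1^2 + x_2^2 + 1)/(x_1 x_2), the identity x_{m+1} = s_1 x_m - x_{m-1} holds for all m ∈ ℤ. -/

import Mathlib

noncomputable abbrev K : Type := FractionRing (MvPolynomial (Fin 2) ℚ)

noncomputable def X1 : K := algebraMap (MvPolynomial (Fin 2) ℚ) K (MvPolynomial.X 0)

noncomputable def X2 : K := algebraMap (MvPolynomial (Fin 2) ℚ) K (MvPolynomial.X 1)

theorem linear_recurrence (x : ℤ → K) (hx1 : x 1 = X1) (hx2 : x 2 = X2)
    (hxnz : ∀ m : ℤ, x m ≠ 0)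
    (hrec : ∀ m : ℤ, x (m - 1) * x (m + 1) = x m ^ 2 + 1) :
    ∀ m : ℤ, x (m + 1) = (x 1 ^ 2 + x 2 ^ 2 + 1) / (x 1 * x 2) * x m - x (m - 1) := by
  have h' : ∀ m : ℤ, x m * x (m + 2) = x (m + 1) ^ 2 + 1 := by
    intro m
    have := hrec (m + 1)
    rw [show m + 1 - 1 = m by ring, show m + 1 + 1 = m + 2 by ring] at this
    exact this
  have const : ∀ m : ℤ,
      (x m ^ 2 + x (m + 1) ^ 2 + 1) * (x 1 * x 2)
        = (x 1 ^ 2 + x 2 ^ 2 + 1) * (x m * x (m + 1)) := by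
    intro m
    induction m using Int.induction_on with
    | zero =>
      -- use h' (-1) : x (-1) * x 1 = x 0 ^ 2 + 1? no, need hrec 1 : x 0 * x 2 = x 1^2+1
      have h := hrec 1
      norm_num at h
      norm_num
      apply mul_left_cancel₀ (hxnz 1)
      linear_combination (-(x 1 ^ 2) * (x 2 - x 0)) * h
    | succ n ih =>
      have h := h' n
      apply mul_left_cancel₀ (hxnz n)
      push_cast
      rw [show (n : ℤ) + 1 + 1 = n + 2 by ring]
      push_cast at ih h
      linear_combination x ((n : ℤ) + 2) * ih - (x 1 * x 2) * (x n - x ((n : ℤ) + 2)) * h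
    | pred n ih =>
      have h := h' (-(n : ℤ) - 1)
      rw [show -(n : ℤ) - 1 + 2 = -n + 1 by ring, show -(n : ℤ) - 1 + 1 = -n by ring] at h
      apply mul_left_cancel₀ (hxnz (-(n : ℤ) + 1))
      push_cast
      rw [show -(n : ℤ) - 1 + 1 = -n by ring]
      push_cast at ih
      linear_combination x (-(n : ℤ) - 1) * ih - (x 1 * x 2) * (x (-(n : ℤ) + 1) - x (-(n : ℤ) - 1)) * h
    all_goals skip
  intro m
  have hC := const m
  have hR := hrec m
  have h12 : x 1 * x 2 ≠ 0 := mul_ne_zero (hxnz 1) (hxnz 2)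
  rw [div_mul_eq_mul_div, eq_sub_iff_add_eq, eq_div_iff h12]
  apply mul_left_cancel₀ (hxnz (m + 1))
  linear_combination hC + (x 1 * x 2) * hR
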